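/- Let Λ be a commutative Noetherian ring, I an ideal, and M a finitely generated Λ-module with cl(Ann_Λ M) ⊇ Iⁿ. Then the I-adic completion M̂ = lim← M/MIⁱ and the localization M^ℓ = M[(1+I)⁻¹] are both isomorphic to M/MIⁿ. -/

import Mathlib

/-- The multiplicative set `1 + I` in a commutative ring. -/
def onePlus {Λ : Type*} [CommRing Λ] (I : Ideal Λ) : Submonoid Λ where
  carrier := {x | ∃ a ∈ I, x = 1 + a}
  one_mem' := ⟨0, I.zero_mem, by ring⟩
  mul_mem' := by
    rintro x y ⟨a, ha, rfl⟩ ⟨b, hb, rfl⟩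
    exact ⟨a + b + a * b, I.add_mem (I.add_mem ha hb) (I.mul_mem_left a hb), by ring⟩

/-- Let `Λ` be a commutative Noetherian ring, `I` an ideal, and `M` a
finitely generated `Λ`-module with `cl(Ann_Λ M) ⊇ Iⁿ`, where `cl(𝔞) = ⋂ₘ (𝔞 + Iᵐ)`
is the `I`-adic closure. Then the `I`-adic completion `M̂ = lim← M/MIⁱ` and the
localization `M^ℓ = M[(1+I)⁻¹]` are both isomorphic to `M/MIⁿ`. -/
theorem stmt5 (Λ : Type) [CommRing Λ] [IsNoetherianRing Λ] (I : Ideal Λ)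
    (M : Type) [AddCommGroup M] [Module Λ M] [Module.Finite Λ M] (n : ℕ)
    (hcl : (I ^ n : Ideal Λ) ≤ ⨅ m : ℕ, ((⊤ : Submodule Λ M).annihilator ⊔ I ^ m)) :
    Nonempty (AdicCompletion I M ≃ₗ[Λ] M ⧸ (I ^ n • (⊤ : Submodule Λ M))) ∧
    Nonempty (LocalizedModule (onePlus I) M ≃ₗ[Λ] M ⧸ (I ^ n • (⊤ : Submodule Λ M))) := by
  set N : Submodule Λ M := I ^ n • ⊤ with hNdef
  -- the annihilator kills everything
  have hann : ((⊤ : Submodule Λ M).annihilator) • (⊤ : Submodule Λ M) = ⊥ := by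
    rw [eq_bot_iff]
    refine Submodule.smul_le.2 fun a ha m _ => ?_
    simpa using Submodule.mem_annihilator.mp ha m Submodule.mem_top
  -- the filtration stabilizes at step n
  have hstab : ∀ m, n ≤ m → (I ^ m • ⊤ : Submodule Λ M) = N := by
    intro m hm
    refine le_antisymm (Submodule.smul_mono_left (Ideal.pow_le_pow_right hm)) ?_
    calc N = (I ^ n) • (⊤ : Submodule Λ M) := rfl
      _ ≤ ((⊤ : Submodule Λ M).annihilator ⊔ I ^ m) • ⊤ :=
          Submodule.smul_mono_left (le_trans hcl (iInf_le _ m))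
      _ = ((⊤ : Submodule Λ M).annihilator) • ⊤ ⊔ (I ^ m) • ⊤ := Submodule.sup_smul _ _ _
      _ = (I ^ m) • (⊤ : Submodule Λ M) := by rw [hann, bot_sup_eq]
  -- elements of I^n annihilate M ⧸ N
  have hnil : ∀ b ∈ (I ^ n : Ideal Λ), ∀ x : M ⧸ N, b • x = 0 := by
    intro b hb x
    obtain ⟨y, rfl⟩ := N.mkQ_surjective x
    rw [← map_smul, Submodule.mkQ_apply, Submodule.Quotient.mk_eq_zero]
    exact Submodule.smul_mem_smul hb Submodule.mem_top
  constructor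
  · -- completion part: evaluation at n is bijective
    have hinj : Function.Injective (AdicCompletion.eval I M n) := by
      intro x y hxy
      ext m
      rcases le_total m n with hm | hm
      · rw [← AdicCompletion.transitionMap_comp_eval_apply I M hm x,
          ← AdicCompletion.transitionMap_comp_eval_apply I M hm y]
        exact congrArg _ hxy
      · -- n ≤ m : transition map is injective since the filtration stabilizes
        obtain ⟨a, ha⟩ := Submodule.Quotient.mk_surjective _ (x.val m)
        obtain ⟨b, hb⟩ := Submodule.Quotient.mk_surjective _ (y.val m)
        have hxn : x.val n = Submodule.Quotient.mk a := by
          rw [← AdicCompletion.transitionMap_comp_eval_apply I M hm x, ← ha]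
          rfl
        have hyn : y.val n = Submodule.Quotient.mk b := by
          rw [← AdicCompletion.transitionMap_comp_eval_apply I M hm y, ← hb]
          rfl
        rw [AdicCompletion.eval_apply, AdicCompletion.eval_apply, hxn, hyn,
          Submodule.Quotient.eq] at hxy
        rw [← ha, ← hb, Submodule.Quotient.eq, hstab m hm]
        exact hxy
    exact ⟨LinearEquiv.ofBijective (AdicCompletion.eval I M n)
      ⟨hinj, AdicCompletion.eval_surjective I M n⟩⟩
  · -- localization part
    -- Nakayama: some 1 + a kills N
    have hIN : N ≤ I • N := by
      have : I • N = I ^ (n + 1) • (⊤ : Submodule Λ M) := by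
        rw [hNdef, ← mul_smul, ← pow_succ']
      rw [this, hstab (n + 1) (Nat.le_succ n)]
    have : IsNoetherian Λ M := isNoetherian_of_isNoetherianRing_of_finite Λ M
    obtain ⟨r, hr1, hr2⟩ :=
      Submodule.exists_sub_one_mem_and_smul_eq_zero_of_fg_of_le_smul I N
        (IsNoetherian.noetherian N) hIN
    have hloc : IsLocalizedModule (onePlus I) N.mkQ := by
      constructor
      · rintro ⟨s, a, ha, rfl⟩
        -- inverse via geometric series
        set t : Λ := ∑ k ∈ Finset.range n, (-a) ^ k with ht
        have hst : (1 + a) * t = 1 - (-a) ^ n := by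
          have := geom_sum_mul (-a) n
          rw [ht]
          linear_combination -this
        have hone : ∀ (c : Λ), (1 + a) * c = 1 - (-a) ^ n →
            algebraMap Λ (Module.End Λ (M ⧸ N)) ((1 + a) * c) = 1 := by
          intro c hc
          rw [hc]
          refine LinearMap.ext fun x => ?_
          rw [Module.algebraMap_end_apply, sub_smul, one_smul,
            hnil _ (Ideal.pow_mem_pow (I.neg_mem ha) n) x, sub_zero]
          rfl
        refine ⟨⟨algebraMap Λ (Module.End Λ (M ⧸ N)) (1 + a),
          algebraMap Λ (Module.End Λ (M ⧸ N)) t, ?_, ?_⟩, rfl⟩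
        · rw [← map_mul]; exact hone t hst
        · rw [← map_mul, mul_comm]; exact hone t hst
      · intro y
        obtain ⟨x, rfl⟩ := N.mkQ_surjective y
        exact ⟨(x, 1), by simp⟩
      · intro x₁ x₂ h
        rw [Submodule.mkQ_apply, Submodule.mkQ_apply, Submodule.Quotient.eq] at h
        refine ⟨⟨r, r - 1, hr1, by ring⟩, ?_⟩
        have := hr2 _ h
        rw [smul_sub] at this
        simpa [sub_eq_zero, Submonoid.smul_def] using this
    exact ⟨IsLocalizedModule.iso (onePlus I) N.mkQ⟩
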